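/- Let n ≥ 1, d ≥ 1, let h = x₁^{2d} + ⋯ + xₙ^{2d}, and let f ∈ ℝ[x₁,…,xₙ] satisfy f(0) = 0. Then there exists N ∈ ℕ such that for every ε > 0, f + ε ∈ ⟨h⟩_{2N} + Σ_{2N}. Consequently, for the problem of minimizing f subject to h(x) = 0, one has f_k = 0 = f_min for all k ≥ N. -/

import Mathlib

open MvPolynomial Pointwise

/-- A polynomial is a sum of squares. -/
def IsSOS {n : ℕ} (p : MvPolynomial (Fin n) ℝ) : Prop :=
  ∃ (m : ℕ) (q : Fin m → MvPolynomial (Fin n) ℝ), p = ∑ i, q i ^ 2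

/-- The `2k`-th truncated ideal generated by the tuple `h`. -/
def truncIdeal {n m : ℕ} (h : Fin m → MvPolynomial (Fin n) ℝ) (k : ℕ) :
    Set (MvPolynomial (Fin n) ℝ) :=
  {p | ∃ φ : Fin m → MvPolynomial (Fin n) ℝ,
    (∀ i, (φ i * h i).totalDegree ≤ 2 * k) ∧ p = ∑ i, φ i * h i}

/-- The `k`-th truncated quadratic module generated by the tuple `g` (with `g₀ = 1`). -/
def truncQM {n m : ℕ} (g : Fin m → MvPolynomial (Fin n) ℝ) (k : ℕ) :
    Set (MvPolynomial (Fin n) ℝ) :=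
  {p | ∃ σ : Fin (m + 1) → MvPolynomial (Fin n) ℝ,
    (∀ j, IsSOS (σ j) ∧
      (σ j * (Fin.cons 1 g : Fin (m + 1) → MvPolynomial (Fin n) ℝ) j).totalDegree ≤ 2 * k) ∧
    p = ∑ j, σ j * (Fin.cons 1 g : Fin (m + 1) → MvPolynomial (Fin n) ℝ) j}

/-- The feasible set `K` of the problem `h = 0, g ≥ 0`. -/
def feasSet {n m₁ m₂ : ℕ} (h : Fin m₁ → MvPolynomial (Fin n) ℝ)
    (g : Fin m₂ → MvPolynomial (Fin n) ℝ) : Set (Fin n → ℝ) :=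
  {x | (∀ i, eval x (h i) = 0) ∧ ∀ j, 0 ≤ eval x (g j)}

/-- The real variety `V_ℝ(h)`. -/
def realVariety {n m : ℕ} (h : Fin m → MvPolynomial (Fin n) ℝ) : Set (Fin n → ℝ) :=
  {x | ∀ i, eval x (h i) = 0}

/-- The vanishing ideal `I(S)` of a set `S ⊆ ℝⁿ`. -/
def vanishIdeal {n : ℕ} (S : Set (Fin n → ℝ)) : Set (MvPolynomial (Fin n) ℝ) :=
  {p | ∀ u ∈ S, eval u p = 0}

/-- The `k`-th Lasserre bound `f_k` (an extended real). -/
noncomputable def lasserreBound {n m₁ m₂ : ℕ} (f : MvPolynomial (Fin n) ℝ)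
    (h : Fin m₁ → MvPolynomial (Fin n) ℝ) (g : Fin m₂ → MvPolynomial (Fin n) ℝ)
    (k : ℕ) : EReal :=
  sSup {γ : EReal | ∃ r : ℝ, γ = (r : EReal) ∧ f - C r ∈ truncIdeal h k + truncQM g k}

/-- `f_min`, the infimum of `f` over `K`, as an extended real (`⊤` if `K = ∅`). -/
noncomputable def fMin {n : ℕ} (f : MvPolynomial (Fin n) ℝ) (K : Set (Fin n → ℝ)) : EReal :=
  ⨅ x ∈ K, (eval x f : EReal)

/-- The set of SOS polynomials of degree at most `2k`. -/
def sigma2k {n : ℕ} (k : ℕ) : Set (MvPolynomial (Fin n) ℝ) :=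
  {p | IsSOS p ∧ p.totalDegree ≤ 2 * k}

/-- The `k`-th Lasserre bound for minimizing `f` subject to `h = 0`
(no inequality constraints). -/
noncomputable def lasserreEqBound {n m : ℕ} (f : MvPolynomial (Fin n) ℝ)
    (h : Fin m → MvPolynomial (Fin n) ℝ) (k : ℕ) : EReal :=
  sSup {γ : EReal | ∃ r : ℝ, γ = (r : EReal) ∧ f - C r ∈ truncIdeal h k + sigma2k k}

namespace LasAux

variable {n d : ℕ}

abbrev P (n : ℕ) := MvPolynomial (Fin n) ℝ




def Good (H : P n) (N : ℕ) (p : P n) : Prop :=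
  ∃ φ σ : P n, IsSOS σ ∧ (φ * H).totalDegree ≤ 2 * N ∧
    σ.totalDegree ≤ 2 * N ∧ p = φ * H + σ

lemma isSOS_zero : IsSOS (0 : P n) := ⟨0, fun _ => 0, by simp⟩

lemma isSOS_add {p q : P n} (hp : IsSOS p) (hq : IsSOS q) : IsSOS (p + q) := by
  obtain ⟨m1, u, rfl⟩ := hp
  obtain ⟨m2, v, rfl⟩ := hq
  refine ⟨m1 + m2, Fin.append u v, ?_⟩
  rw [Fin.sum_univ_add]
  simp [Fin.append_left, Fin.append_right]

lemma isSOS_C {c : ℝ} (hc : 0 ≤ c) : IsSOS (C c : P n) := by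
  refine ⟨1, fun _ => C (Real.sqrt c), ?_⟩
  rw [Fin.sum_univ_one, ← map_pow, sq, Real.mul_self_sqrt hc]

lemma isSOS_C_mul {c : ℝ} (hc : 0 ≤ c) {p : P n} (hp : IsSOS p) : IsSOS (C c * p) := by
  obtain ⟨m, q, rfl⟩ := hp
  refine ⟨m, fun i => C (Real.sqrt c) * q i, ?_⟩
  rw [Finset.mul_sum]
  refine Finset.sum_congr rfl fun i _ => ?_
  rw [mul_pow, ← map_pow, sq (Real.sqrt c), Real.mul_self_sqrt hc]

lemma good_mono {H : P n} {N N' : ℕ} (h : N ≤ N') {p : P n} (hp : Good H N p) :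
    Good H N' p := by
  obtain ⟨φ, σ, h1, h2, h3, h4⟩ := hp
  exact ⟨φ, σ, h1, h2.trans (by omega), h3.trans (by omega), h4⟩

lemma good_zero {H : P n} {N : ℕ} : Good H N (0 : P n) :=
  ⟨0, 0, isSOS_zero, by simp, by simp, by simp⟩

lemma good_add {H : P n} {N : ℕ} {p q : P n} (hp : Good H N p) (hq : Good H N q) :
    Good H N (p + q) := by
  obtain ⟨φ1, σ1, a1, b1, c1, d1⟩ := hp
  obtain ⟨φ2, σ2, a2, b2, c2, d2⟩ := hq
  refine ⟨φ1 + φ2, σ1 + σ2, isSOS_add a1 a2, ?_, ?_, by rw [d1, d2]; ring⟩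
  · rw [add_mul]
    exact (totalDegree_add _ _).trans (max_le b1 b2)
  · exact (totalDegree_add _ _).trans (max_le c1 c2)

lemma good_sos {H : P n} {N : ℕ} {σ : P n} (h1 : IsSOS σ) (h2 : σ.totalDegree ≤ 2 * N) :
    Good H N σ := ⟨0, σ, h1, by simp, h2, by simp⟩

lemma good_smul {H : P n} {N : ℕ} {c : ℝ} (hc : 0 ≤ c) {p : P n} (hp : Good H N p) :
    Good H N (C c * p) := by
  obtain ⟨φ, σ, a1, b1, c1, d1⟩ := hp
  refine ⟨C c * φ, C c * σ, isSOS_C_mul hc a1, ?_, ?_, by rw [d1]; ring⟩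
  · rw [mul_assoc]
    exact (totalDegree_mul _ _).trans (by simpa [totalDegree_C] using b1)
  · exact (totalDegree_mul _ _).trans (by simpa [totalDegree_C] using c1)

lemma good_sum {H : P n} {N : ℕ} {ι : Type*} {s : Finset ι} {p : ι → P n}
    (h : ∀ a ∈ s, Good H N (p a)) : Good H N (∑ a ∈ s, p a) := by
  classical
  induction s using Finset.induction_on with
  | empty => simpa using good_zero
  | insert _ _ hx ih =>
    rw [Finset.sum_insert hx]
    exact good_add (h _ (Finset.mem_insert_self _ _))
      (ih fun a ha => h a (Finset.mem_insert_of_mem ha))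


noncomputable def HS (n d : ℕ) : P n := ∑ i : Fin n, X i ^ (2 * d)

lemma degHS : (HS n d).totalDegree ≤ 2 * d := by
  refine totalDegree_finsetSum_le fun i _ => ?_
  exact le_of_eq (totalDegree_X_pow _ _)

lemma evalHS (hd : 1 ≤ d) : eval (0 : Fin n → ℝ) (HS n d) = 0 := by
  simp only [HS, map_sum, map_pow, eval_X]
  simp [zero_pow (by omega : 2 * d ≠ 0)]

lemma good_neg_sq {N : ℕ} (i : Fin n) (q : P n) (hN : q.totalDegree + d ≤ N) :
    Good (HS n d) N (-(q ^ 2 * X i ^ (2 * d))) := by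
  classical
  refine ⟨-(q ^ 2), ∑ j : Fin n, (if j = i then 0 else q * X j ^ d) ^ 2,
    ⟨n, fun j => if j = i then 0 else q * X j ^ d, rfl⟩, ?_, ?_, ?_⟩
  · rw [neg_mul, totalDegree_neg]
    refine (totalDegree_mul _ _).trans ?_
    have h1 : (q ^ 2).totalDegree ≤ 2 * q.totalDegree := by
      simpa using totalDegree_pow q 2
    have := degHS (n := n) (d := d)
    omega
  · refine totalDegree_finsetSum_le fun j _ => ?_
    split
    · simp
    · refine (totalDegree_pow _ _).trans ?_
      have : (q * X j ^ d).totalDegree ≤ q.totalDegree + d := by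
        exact (totalDegree_mul _ _).trans (le_of_eq (by rw [totalDegree_X_pow]))
      omega
  · have key : ∀ j : Fin n, (if j = i then 0 else q * X j ^ d) ^ 2
        = q ^ 2 * X j ^ (2 * d) - (if j = i then q ^ 2 * X j ^ (2 * d) else 0) := by
      intro j
      split
      · simp
      · rw [mul_pow, ← pow_mul, mul_comm d 2, sub_zero]
    simp only [key]
    rw [Finset.sum_sub_distrib, Finset.sum_ite_eq' Finset.univ i
      (fun j => q ^ 2 * X j ^ (2 * d)), if_pos (Finset.mem_univ i), ← Finset.mul_sum]
    show _ = -(q ^ 2) * HS n d + (q ^ 2 * HS n d - q ^ 2 * X i ^ (2 * d))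
    ring

lemma good_step (u : P n)
    (hu : ∃ N, ∀ δ : ℝ, 0 < δ → Good (HS n d) N (C δ - u * u)) :
    ∃ N, ∀ δ : ℝ, 0 < δ → Good (HS n d) N (C δ + u) := by
  obtain ⟨N₀, h₀⟩ := hu
  refine ⟨max N₀ u.totalDegree, fun δ hδ => ?_⟩
  set a := Real.sqrt (δ / 2) with ha
  have ha0 : 0 < a := Real.sqrt_pos.mpr (by linarith)
  set b := 1 / (2 * a) with hb
  have ha2 : a ^ 2 = δ / 2 := Real.sq_sqrt (by linarith)
  have hab : a * b = 1 / 2 := by rw [hb]; field_simp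
  have hb2 : b ^ 2 * δ ^ 2 = δ / 2 := by
    have h4 : (2 * a) ^ 2 = 2 * δ := by rw [mul_pow, ha2]; ring
    rw [hb, div_pow, one_pow, h4]
    field_simp
  have key : (C δ : P n) + u = (C a + C b * u) ^ 2 + C (b ^ 2) * (C (δ ^ 2) - u * u) := by
    have h1 : (C a : P n) ^ 2 = C (δ / 2) := by rw [← map_pow, ha2]
    have h2 : (C a : P n) * C b = C (1 / 2 : ℝ) := by rw [← map_mul, hab]
    have h3 : (C b : P n) ^ 2 * C (δ ^ 2) = C (δ / 2) := by rw [← map_pow, ← map_mul, hb2]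
    have h4 : (C (δ / 2) : P n) + C (δ / 2) = C δ := by rw [← map_add]; norm_num
    have h5 : (C (1 / 2 : ℝ) : P n) + C (1 / 2 : ℝ) = 1 := by
      rw [← map_add]; norm_num
    have h6 : (C (b ^ 2) : P n) = C b ^ 2 := by rw [map_pow]
    linear_combination -h1 - 2 * u * h2 - h3 - h4 - u * h5 + (u * u - C (δ ^ 2)) * h6
  rw [key]
  refine good_add (good_sos ⟨1, fun _ => C a + C b * u, by rw [Fin.sum_univ_one]⟩ ?_) ?_
  · refine (totalDegree_pow _ _).trans ?_
    have hdeg : (C a + C b * u).totalDegree ≤ u.totalDegree := by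
      refine (totalDegree_add _ _).trans (max_le (by simp [totalDegree_C]) ?_)
      exact (totalDegree_mul _ _).trans (by simp [totalDegree_C])
    have := le_max_right N₀ u.totalDegree
    omega
  · exact good_smul (sq_nonneg b) (good_mono (le_max_left _ _) (h₀ (δ ^ 2) (by positivity)))

lemma good_base (α : Fin n →₀ ℕ) (i : Fin n) (hαi : d ≤ α i) :
    ∃ N, ∀ δ : ℝ, 0 < δ → Good (HS n d) N (C δ - monomial α 1 * monomial α 1) := by
  set β := α - Finsupp.single i d with hβ
  have hle : Finsupp.single i d ≤ α := by
    rw [Finsupp.single_le_iff]; exact hαi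
  have hadd : β + Finsupp.single i d = α := tsub_add_cancel_of_le hle
  have hmon : monomial α (1 : ℝ) * monomial α 1
      = (monomial β 1) ^ 2 * X i ^ (2 * d) := by
    rw [X_pow_eq_monomial, sq, monomial_mul, monomial_mul, monomial_mul, one_mul, one_mul]
    congr 1
    rw [two_mul, Finsupp.single_add, ← hadd]
    abel
  refine ⟨(monomial β (1:ℝ)).totalDegree + d, fun δ hδ => ?_⟩
  rw [hmon, sub_eq_add_neg]
  exact good_add (good_sos (isSOS_C hδ.le) (by simp [totalDegree_C])) (good_neg_sq i _ le_rfl)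

lemma good_pow : ∀ (r : ℕ) (α : Fin n →₀ ℕ) (i : Fin n), 1 ≤ α i → d ≤ 2 ^ r * α i →
    ∃ N, ∀ δ : ℝ, 0 < δ → Good (HS n d) N (C δ - monomial α 1 * monomial α 1) := by
  intro r
  induction r with
  | zero => exact fun α i h1 h2 => good_base α i (by simpa using h2)
  | succ r ih =>
    intro α i h1 h2
    have hrec := ih (α + α) i (by simp only [Finsupp.add_apply]; omega)
      (by
        have e : 2 ^ r * ((α + α) i) = 2 ^ (r + 1) * α i := by
          simp only [Finsupp.add_apply, pow_succ]; ring
        omega)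
    have hs := good_step (d := d) (u := -(monomial α 1 * monomial α 1)) ?_
    · obtain ⟨N, hN⟩ := hs
      exact ⟨N, fun δ hδ => by simpa [sub_eq_add_neg] using hN δ hδ⟩
    · obtain ⟨N, hN⟩ := hrec
      refine ⟨N, fun δ hδ => ?_⟩
      have e : -(monomial α (1:ℝ) * monomial α 1) * -(monomial α 1 * monomial α 1)
          = monomial (α + α) (1:ℝ) * monomial (α + α) 1 := by
        rw [neg_mul_neg, monomial_mul, one_mul]
      rw [e]
      exact hN δ hδ

lemma good_term (α : Fin n →₀ ℕ) (c : ℝ) (hα : α = 0 → c = 0) :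
    ∃ N, ∀ δ : ℝ, 0 < δ → Good (HS n d) N (C δ + monomial α c) := by
  by_cases hc : c = 0
  · subst hc
    exact ⟨0, fun δ hδ => by
      simpa using good_sos (isSOS_C hδ.le) (by simp [totalDegree_C])⟩
  · have hα0 : α ≠ 0 := fun h => hc (hα h)
    obtain ⟨i, hi⟩ : ∃ i, 1 ≤ α i := by
      by_contra h
      push_neg at h
      exact hα0 (Finsupp.ext fun i => by have := h i; simp only [Finsupp.coe_zero, Pi.zero_apply]; omega)
    obtain ⟨N, hN⟩ := good_pow d α i hi
      (le_trans (Nat.lt_two_pow_self (n := d)).le (Nat.le_mul_of_pos_right _ (by omega)))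
    apply good_step
    refine ⟨N, fun δ hδ => ?_⟩
    have hc2 : (c : ℝ) ^ 2 ≠ 0 := pow_ne_zero _ hc
    have e : (C δ : P n) - monomial α c * monomial α c
        = C (c ^ 2) * (C (δ / c ^ 2) - monomial α 1 * monomial α 1) := by
      have e1 : (C (c ^ 2) : P n) * C (δ / c ^ 2) = C δ := by
        rw [← map_mul]
        congr 1
        field_simp
      have e2 : monomial α c * monomial α c
          = (C (c ^ 2) : P n) * (monomial α 1 * monomial α 1) := by
        rw [monomial_mul, monomial_mul, one_mul, C_mul_monomial, mul_one, sq]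
      linear_combination -e1 - e2
    rw [e]
    exact good_smul (sq_nonneg c) (hN _ (by positivity))

lemma main1 (f : P n) (hf0 : coeff 0 f = 0) :
    ∃ N, ∀ ε : ℝ, 0 < ε → Good (HS n d) N (f + C ε) := by
  classical
  have hterm : ∀ α : Fin n →₀ ℕ,
      ∃ N, ∀ δ : ℝ, 0 < δ → Good (HS n d) N (C δ + monomial α (coeff α f)) :=
    fun α => good_term α _ (fun h => by rw [h]; exact hf0)
  choose g hg using hterm
  refine ⟨f.support.sup g, fun ε hε => ?_⟩
  by_cases hne : f.support = ∅
  · rw [support_eq_empty.mp hne, zero_add]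
    exact good_sos (isSOS_C hε.le) (by simp [totalDegree_C])
  · have hcard : 0 < f.support.card :=
      Finset.card_pos.mpr (Finset.nonempty_iff_ne_empty.mpr hne)
    have heq : f + C ε
        = ∑ α ∈ f.support, (monomial α (coeff α f) + C (ε / f.support.card)) := by
      rw [Finset.sum_add_distrib, support_sum_monomial_coeff]
      congr 1
      rw [← map_sum C (fun _ => ε / (f.support.card : ℝ)) f.support]
      congr 1
      rw [Finset.sum_const, nsmul_eq_mul]
      field_simp
    rw [heq]
    refine good_sum fun α hα => ?_
    have : Good (HS n d) (g α) (C (ε / f.support.card) + monomial α (coeff α f)) :=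
      hg α _ (by positivity)
    exact good_mono (Finset.le_sup hα) (by rwa [add_comm] at this)


lemma isSOS_eval_nonneg {p : P n} (hp : IsSOS p) (x : Fin n → ℝ) : 0 ≤ eval x p := by
  obtain ⟨m, q, rfl⟩ := hp
  rw [map_sum]
  exact Finset.sum_nonneg fun i _ => by rw [map_pow]; exact sq_nonneg _

lemma mem_iff_good {N : ℕ} {p : P n} :
    p ∈ truncIdeal (fun _ : Fin 1 => HS n d) N + sigma2k N ↔ Good (HS n d) N p := by
  constructor
  · intro hp
    rcases Set.mem_add.mp hp with ⟨a, ha, b, hb, rfl⟩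
    obtain ⟨φ, hφ, rfl⟩ := ha
    obtain ⟨hb1, hb2⟩ := hb
    exact ⟨φ 0, b, hb1, by simpa using hφ 0, hb2, by rw [Fin.sum_univ_one]⟩
  · rintro ⟨φ, σ, h1, h2, h3, rfl⟩
    refine Set.mem_add.mpr ⟨φ * HS n d, ⟨fun _ => φ, fun i => h2, by rw [Fin.sum_univ_one]⟩,
      σ, ⟨h1, h3⟩, rfl⟩

end LasAux

/-- Let `h = x₁^{2d} + ⋯ + xₙ^{2d}` and `f(0) = 0`. Then there is `N` with
`f + ε ∈ ⟨h⟩_{2N} + Σ_{2N}` for every `ε > 0`; consequently for the problem of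
minimizing `f` subject to `h = 0`, `f_k = 0 = f_min` for all `k ≥ N`. -/

theorem lasserre_finite_convergence_sum_even_powers
    {n d : ℕ} (hn : 0 < n) (hd : 1 ≤ d)
    (f : MvPolynomial (Fin n) ℝ) (hf0 : eval (0 : Fin n → ℝ) f = 0) :
    ∃ N : ℕ,
      (∀ ε : ℝ, 0 < ε →
        f + C ε ∈ truncIdeal (fun _ : Fin 1 => ∑ i : Fin n, X i ^ (2 * d)) N
          + sigma2k N) ∧
      ∀ k ≥ N,
        lasserreEqBound f (fun _ : Fin 1 => ∑ i : Fin n, X i ^ (2 * d)) k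
          = (0 : EReal) := by
  classical
  have hc0 : MvPolynomial.coeff 0 f = 0 := by
    rw [eval_zero] at hf0
    exact hf0
  obtain ⟨N, hN⟩ := LasAux.main1 (d := d) f hc0
  have hHS : (fun _ : Fin 1 => ∑ i : Fin n, X i ^ (2 * d)) = fun _ : Fin 1 => LasAux.HS n d :=
    rfl
  refine ⟨N, fun ε hε => ?_, fun k hk => ?_⟩
  · rw [hHS]
    exact LasAux.mem_iff_good.mpr (hN ε hε)
  · rw [hHS]
    unfold lasserreEqBound
    apply le_antisymm
    · apply sSup_le
      rintro γ ⟨r, rfl, hr⟩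
      rcases Set.mem_add.mp hr with ⟨a, ha, b, hb, hab⟩
      obtain ⟨φ, hφdeg, rfl⟩ := ha
      obtain ⟨hbsos, hbdeg⟩ := hb
      have hev : eval (0 : Fin n → ℝ) (f - C r) = -r := by
        rw [map_sub, hf0, eval_C]; ring
      have hevsum : eval (0 : Fin n → ℝ) ((∑ i : Fin 1, φ i * LasAux.HS n d) + b)
          = eval 0 b := by
        rw [map_add, Fin.sum_univ_one, map_mul, LasAux.evalHS hd, mul_zero, zero_add]
      have : (0 : ℝ) ≤ -r := by
        rw [← hev, ← hab, hevsum]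
        exact LasAux.isSOS_eval_nonneg hbsos 0
      exact EReal.coe_nonpos.mpr (by linarith)
    · by_contra hlt
      push_neg at hlt
      obtain ⟨r, h1, h2⟩ := EReal.exists_between_coe_real hlt
      have hrneg : r < 0 := by exact_mod_cast h2
      have hmem : (r : EReal) ∈ {γ : EReal | ∃ s : ℝ, γ = (s : EReal) ∧
          f - C s ∈ truncIdeal (fun _ : Fin 1 => LasAux.HS n d) k + sigma2k k} := by
        refine ⟨r, rfl, ?_⟩
        have : f - C r = f + C (-r) := by rw [map_neg, sub_eq_add_neg]
        rw [this]
        exact LasAux.mem_iff_good.mpr (LasAux.good_mono hk (hN (-r) (by linarith)))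
      exact absurd (le_sSup hmem) (not_le.mpr h1)
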